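/- Let f(κ) = H_k(κ)^{1/k} with 1 ≤ k ≤ n−1. For κ ∈ Γ̃_k and any fixed index i, one has f(κ) − (∂f/∂κ_i)(κ)·κ_i = H_k^{1/k} · ((k−1)σ_k(κ) + σ_k(κ|i))/(k·σ_k(κ)) > 0. -/

import Mathlib

open Real

/-- The k-th elementary symmetric polynomial of `κ : Fin n → ℝ`. -/
noncomputable def esymm (n k : ℕ) (κ : Fin n → ℝ) : ℝ :=
  ∑ s ∈ Finset.powersetCard k (Finset.univ : Finset (Fin n)), ∏ i ∈ s, κ i

/-- The normalized k-th mean curvature `H_k = σ_k / C(n,k)`. -/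
noncomputable def Hmean (n k : ℕ) (κ : Fin n → ℝ) : ℝ := esymm n k κ / (n.choose k)

noncomputable def Dsum (n k : ℕ) (κ : Fin n → ℝ) (i : Fin n) : ℝ :=
  ∑ s ∈ (Finset.powersetCard k (Finset.univ : Finset (Fin n))).filter (fun s => i ∈ s),
    ∏ m ∈ s.erase i, κ m

lemma esymm_update (n k : ℕ) (κ : Fin n → ℝ) (i : Fin n) :
    esymm n k (Function.update κ i 0) =
      ∑ s ∈ (Finset.powersetCard k (Finset.univ : Finset (Fin n))).filter (fun s => i ∉ s),
        ∏ m ∈ s, κ m := by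
  rw [esymm, ← Finset.sum_filter_add_sum_filter_not _ (fun s => i ∉ s)]
  have h1 : ∀ s ∈ (Finset.powersetCard k (Finset.univ : Finset (Fin n))).filter
      (fun s => i ∉ s), ∏ m ∈ s, Function.update κ i 0 m = ∏ m ∈ s, κ m := by
    intro s hs
    obtain ⟨-, hi⟩ := Finset.mem_filter.mp hs
    exact Finset.prod_congr rfl fun m hm => Function.update_of_ne (by rintro rfl; exact hi hm) _ _
  have h2 : ∀ s ∈ (Finset.powersetCard k (Finset.univ : Finset (Fin n))).filter
      (fun s => ¬ i ∉ s), ∏ m ∈ s, Function.update κ i 0 m = 0 := by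
    intro s hs
    obtain ⟨-, hi⟩ := Finset.mem_filter.mp hs
    exact Finset.prod_eq_zero (not_not.mp hi) (Function.update_self i 0 κ)
  rw [Finset.sum_congr rfl h1, Finset.sum_congr rfl h2, Finset.sum_const_zero, add_zero]

lemma esymm_split (n k : ℕ) (κ : Fin n → ℝ) (i : Fin n) :
    esymm n k κ = esymm n k (Function.update κ i 0) + κ i * Dsum n k κ i := by
  rw [esymm_update, Dsum, Finset.mul_sum, esymm,
    ← Finset.sum_filter_add_sum_filter_not _ (fun s => i ∉ s)]
  congr 1
  refine Finset.sum_congr (by simp) fun s hs => ?_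
  obtain ⟨-, hi⟩ := Finset.mem_filter.mp hs
  exact (Finset.mul_prod_erase s κ hi).symm

lemma esymm_sum_update (n k : ℕ) (hkn : k ≤ n) (κ : Fin n → ℝ) :
    ∑ j, esymm n k (Function.update κ j 0) = ((n : ℝ) - k) * esymm n k κ := by
  have : ∀ j : Fin n, esymm n k (Function.update κ j 0) =
      ∑ s ∈ Finset.powersetCard k (Finset.univ : Finset (Fin n)),
        if j ∉ s then ∏ m ∈ s, κ m else 0 := by
    intro j; rw [esymm_update, Finset.sum_filter]
  simp only [this]
  rw [Finset.sum_comm]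
  rw [esymm, Finset.mul_sum]
  refine Finset.sum_congr rfl fun s hs => ?_
  have hcard : s.card = k := (Finset.mem_powersetCard.mp hs).2
  rw [Finset.sum_ite, Finset.sum_const, Finset.sum_const_zero, add_zero]
  have hfilt : (Finset.univ.filter (fun j : Fin n => j ∉ s)) = sᶜ := by
    ext j; simp [Finset.mem_compl]
  rw [hfilt, Finset.card_compl, hcard, Fintype.card_fin, nsmul_eq_mul, Nat.cast_sub hkn]

lemma esymm_pos (n k : ℕ) (hk1 : 1 ≤ k) (hkn : k ≤ n - 1) (κ : Fin n → ℝ)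
    (h2 : ∀ j : Fin n, -(((k:ℝ)-1) * esymm n k κ) < esymm n k (Function.update κ j 0)) :
    0 < esymm n k κ := by
  have hn2 : 2 ≤ n := by omega
  have hkn' : k ≤ n := by omega
  haveI : Nonempty (Fin n) := ⟨⟨0, by omega⟩⟩
  have hsum : ∑ _j : Fin n, -(((k:ℝ)-1) * esymm n k κ)
      < ∑ j, esymm n k (Function.update κ j 0) :=
    Finset.sum_lt_sum_of_nonempty Finset.univ_nonempty (fun j _ => h2 j)
  rw [esymm_sum_update n k hkn' κ, Finset.sum_const, Finset.card_univ, Fintype.card_fin,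
    nsmul_eq_mul] at hsum
  have hk' : (1:ℝ) ≤ k := by exact_mod_cast hk1
  have hn' : (k:ℝ) + 1 ≤ n := by exact_mod_cast (by omega : k + 1 ≤ n)
  have hfac : (0:ℝ) < (n:ℝ)*(k:ℝ) - k := by nlinarith
  by_contra hcon
  push_neg at hcon
  nlinarith [hsum, mul_nonpos_iff.mpr (Or.inl ⟨le_of_lt hfac, hcon⟩)]

theorem stmt_6 (n k : ℕ) (hk1 : 1 ≤ k) (hkn : k ≤ n - 1) (κ : Fin n → ℝ)
    (h1 : ∀ m, 1 ≤ m → m ≤ k - 1 → 0 < esymm n m κ)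
    (h2 : ∀ j : Fin n,
      -(((k : ℝ) - 1) * esymm n k κ) < esymm n k (Function.update κ j 0))
    (i : Fin n) :
    (Hmean n k κ) ^ ((1 : ℝ) / k)
        - fderiv ℝ (fun x => (Hmean n k x) ^ ((1 : ℝ) / k)) κ (Pi.single i 1) * κ i
      = (Hmean n k κ) ^ ((1 : ℝ) / k)
          * ((((k : ℝ) - 1) * esymm n k κ + esymm n k (Function.update κ i 0))
              / ((k : ℝ) * esymm n k κ)) ∧
    0 < (Hmean n k κ) ^ ((1 : ℝ) / k)
        - fderiv ℝ (fun x => (Hmean n k x) ^ ((1 : ℝ) / k)) κ (Pi.single i 1) * κ i := by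
  classical
  have hn2 : 2 ≤ n := by omega
  have hkn' : k ≤ n := by omega
  have hC : 0 < (n.choose k : ℝ) := by exact_mod_cast Nat.choose_pos hkn'
  have hσ : 0 < esymm n k κ := esymm_pos n k hk1 hkn κ h2
  have hH : 0 < Hmean n k κ := div_pos hσ hC
  have hkR : 0 < (k:ℝ) := by exact_mod_cast hk1
  set L : (Fin n → ℝ) →L[ℝ] ℝ :=
    ∑ s ∈ Finset.powersetCard k (Finset.univ : Finset (Fin n)), ∑ m ∈ s,
      (∏ j ∈ s.erase m, κ j) • (ContinuousLinearMap.proj m : (Fin n → ℝ) →L[ℝ] ℝ) with hLdef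
  have hesymm : HasFDerivAt (fun x => esymm n k x) L κ := by
    refine HasFDerivAt.fun_sum fun s _ => ?_
    exact HasFDerivAt.finset_prod (fun m _ => hasFDerivAt_apply m κ)
  have hfun : (fun x => (Hmean n k x) ^ ((1:ℝ)/k))
      = fun x => (((n.choose k : ℝ))⁻¹ • esymm n k x) ^ ((1:ℝ)/k) := by
    funext x; rw [Hmean, div_eq_inv_mul, smul_eq_mul]
  have hHder : HasFDerivAt (fun x => ((n.choose k : ℝ))⁻¹ • esymm n k x)
      (((n.choose k : ℝ))⁻¹ • L) κ := hesymm.fun_const_smul _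
  have hHx : ((n.choose k : ℝ))⁻¹ • esymm n k κ = Hmean n k κ := by
    rw [Hmean, div_eq_inv_mul, smul_eq_mul]
  have hf : HasFDerivAt (fun x => (((n.choose k : ℝ))⁻¹ • esymm n k x) ^ ((1:ℝ)/k))
      ((((1:ℝ)/k) * (((n.choose k : ℝ))⁻¹ • esymm n k κ) ^ ((1:ℝ)/k - 1)) •
        (((n.choose k : ℝ))⁻¹ • L)) κ :=
    hHder.rpow_const (Or.inl (by rw [hHx]; exact ne_of_gt hH))
  have hL : L (Pi.single i 1) = Dsum n k κ i := by
    rw [hLdef]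
    simp only [ContinuousLinearMap.sum_apply, ContinuousLinearMap.smul_apply,
      ContinuousLinearMap.proj_apply, smul_eq_mul]
    have hss : ∀ s ∈ Finset.powersetCard k (Finset.univ : Finset (Fin n)),
        ∑ m ∈ s, (∏ j ∈ s.erase m, κ j) * (Pi.single i 1 : Fin n → ℝ) m
        = if i ∈ s then ∏ j ∈ s.erase i, κ j else 0 := by
      intro s _
      rw [← Finset.sum_ite_eq' s i (fun m => ∏ j ∈ s.erase m, κ j)]
      refine Finset.sum_congr rfl fun m _ => ?_
      by_cases h : m = i <;> simp [h, Pi.single_apply]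
    rw [Finset.sum_congr rfl hss, ← Finset.sum_filter, Dsum]
  have hfd : fderiv ℝ (fun x => (Hmean n k x) ^ ((1:ℝ)/k)) κ (Pi.single i 1)
      = (((1:ℝ)/k) * (Hmean n k κ) ^ ((1:ℝ)/k - 1)) * (Dsum n k κ i / (n.choose k : ℝ)) := by
    rw [hfun, hf.fderiv]
    simp only [ContinuousLinearMap.smul_apply, hL, smul_eq_mul]
    rw [show ((n.choose k : ℝ))⁻¹ * esymm n k κ = Hmean n k κ by
      rw [Hmean, div_eq_inv_mul]]
    ring
  have hσ' : esymm n k (Function.update κ i 0) = esymm n k κ - κ i * Dsum n k κ i := by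
    have := esymm_split n k κ i; linarith
  have hnum : 0 < ((k:ℝ) - 1) * esymm n k κ + esymm n k (Function.update κ i 0) := by
    have := h2 i; linarith
  have key : (Hmean n k κ) ^ ((1 : ℝ) / k)
        - fderiv ℝ (fun x => (Hmean n k x) ^ ((1 : ℝ) / k)) κ (Pi.single i 1) * κ i
      = (Hmean n k κ) ^ ((1 : ℝ) / k)
          * ((((k : ℝ) - 1) * esymm n k κ + esymm n k (Function.update κ i 0))
              / ((k : ℝ) * esymm n k κ)) := by
    rw [hfd, hσ', Real.rpow_sub_one (ne_of_gt hH)]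
    rw [show Hmean n k κ = esymm n k κ / (n.choose k : ℝ) from rfl]
    field_simp
    ring
  refine ⟨key, ?_⟩
  rw [key]
  exact mul_pos (Real.rpow_pos_of_pos hH _) (div_pos hnum (mul_pos hkR hσ))
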